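/- Assume α > 1 and let m be the unique positive real with Σᵣ k⁺(r)/(m + k⁻(r)) = 1. Define Fᵢ = k⁻(i)/(m + k⁻(i)) for i ∈ Fin d. Then each Fᵢ ∈ (0,1) and Fᵢ·((k⁻(i) + K) − Σᵣ k⁺(r)·Fᵣ) = k⁻(i) for every i; moreover, F is the unique vector in (0,1)^d satisfying this system, i.e., any G with Gᵢ ∈ (0,1) and Gᵢ·((k⁻(i) + K) − Σᵣ k⁺(r)·Gᵣ) = k⁻(i) for all i equals F. -/
import Mathlib

/-- Assume `α = Σ i, k⁺ i / k⁻ i > 1` and let `m` be the unique positive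
real with `Σ r, k⁺ r / (m + k⁻ r) = 1`.  Define `F i = k⁻ i / (m + k⁻ i)`.  Then each
`F i ∈ (0,1)` and `F i · ((k⁻ i + K) − Σ r, k⁺ r · F r) = k⁻ i` for every `i`, where
`K = Σ i, k⁺ i`; moreover `F` is the unique vector in `(0,1)^d` satisfying this system. -/
theorem stmt4 (d : ℕ) (hd : 1 ≤ d) (kp km : Fin d → ℝ)
    (hkp : ∀ i, 0 < kp i) (hkm : ∀ i, 0 < km i)
    (K : ℝ) (hK : K = ∑ i : Fin d, kp i)
    (hα : 1 < ∑ i : Fin d, kp i / km i)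
    (m : ℝ) (hm : 0 < m) (hmeq : ∑ r : Fin d, kp r / (m + km r) = 1)
    (F : Fin d → ℝ) (hF : ∀ i, F i = km i / (m + km i)) :
    (∀ i, 0 < F i ∧ F i < 1) ∧
    (∀ i, F i * ((km i + K) - ∑ r : Fin d, kp r * F r) = km i) ∧
    (∀ G : Fin d → ℝ, (∀ i, 0 < G i ∧ G i < 1) →
      (∀ i, G i * ((km i + K) - ∑ r : Fin d, kp r * G r) = km i) → G = F) := by
  have hden : ∀ r, 0 < m + km r := fun r => by have := hkm r; linarith
  have hsumF : ∑ r : Fin d, kp r * F r = K - m := by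
    have : ∀ r, kp r * F r = kp r - m * (kp r / (m + km r)) := by
      intro r
      rw [hF r]
      field_simp [(hden r).ne']
      ring
    rw [Finset.sum_congr rfl (fun r _ => this r), Finset.sum_sub_distrib,
      ← Finset.mul_sum, hmeq, hK]
    ring
  refine ⟨fun i => ?_, fun i => ?_, fun G hG hGeq => ?_⟩
  · rw [hF i]
    constructor
    · exact div_pos (hkm i) (hden i)
    · rw [div_lt_one (hden i)]; linarith [hm]
  · rw [hsumF, hF i]
    have e : km i + K - (K - m) = m + km i := by ring
    rw [e, div_mul_cancel₀ _ (hden i).ne']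
  · -- uniqueness
    set S := ∑ r : Fin d, kp r * G r with hS
    set μ := K - S with hμdef
    have hGeq' : ∀ i, G i * (km i + μ) = km i := by
      intro i
      have h := hGeq i
      have e : km i + K - S = km i + μ := by rw [hμdef]; ring
      rw [e] at h
      exact h
    have i0 : Fin d := ⟨0, hd⟩
    have hμpos : 0 < μ := by
      have h1 := hGeq' i0
      have h2 := hG i0
      nlinarith [hkm i0, h2.1, h2.2]
    have hdenμ : ∀ r, 0 < μ + km r := fun r => by have := hkm r; linarith
    have hGval : ∀ i, G i = km i / (μ + km i) := by
      intro i
      have h := hGeq' i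
      rw [eq_div_iff (hdenμ i).ne']
      linarith [h]
    have hSval : S = K - μ * ∑ r : Fin d, kp r / (μ + km r) := by
      have : ∀ r, kp r * G r = kp r - μ * (kp r / (μ + km r)) := by
        intro r
        rw [hGval r]
        field_simp [(hdenμ r).ne']
        ring
      rw [hS, Finset.sum_congr rfl (fun r _ => this r), Finset.sum_sub_distrib,
        ← Finset.mul_sum, hK]
    have hT1 : ∑ r : Fin d, kp r / (μ + km r) = 1 := by
      have : μ = μ * ∑ r : Fin d, kp r / (μ + km r) := by
        rw [hμdef] at *; linarith [hSval]
      have h2 : μ * 1 = μ * ∑ r : Fin d, kp r / (μ + km r) := by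
        rw [mul_one]; exact this
      exact (mul_left_cancel₀ (ne_of_gt hμpos) h2).symm
    have hμm : μ = m := by
      by_contra hne
      rcases lt_or_gt_of_ne hne with hlt | hgt
      · have : (1:ℝ) < ∑ r : Fin d, kp r / (μ + km r) := by
          rw [← hmeq]
          apply Finset.sum_lt_sum_of_nonempty
          · exact Finset.univ_nonempty_iff.mpr ⟨i0⟩
          · intro r _
            apply div_lt_div_of_pos_left (hkp r) (hdenμ r)
            linarith
        linarith [hT1]
      · have : ∑ r : Fin d, kp r / (μ + km r) < 1 := by
          rw [← hmeq]
          apply Finset.sum_lt_sum_of_nonempty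
          · exact Finset.univ_nonempty_iff.mpr ⟨i0⟩
          · intro r _
            apply div_lt_div_of_pos_left (hkp r) (hden r)
            linarith
        linarith [hT1]
    funext i
    rw [hGval i, hμm, hF i]
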